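/- Let V be a finite-dimensional complex inner product space, let H' and B be self-adjoint linear endomorphisms of V, let M ∈ ℝ be such that every eigenvalue of H' is strictly greater than −M, and let λ > 0. Define H̄' := H'·E^{H'}((−M,M)) + M·E^{H'}([M,∞)) and H̄ := H̄' + B. Assume the complex Hadamard bound: for every s ∈ ℂ with |s| < 2λ, ‖e^{sH'}·B·e^{−sH'}‖ ≤ ‖B‖/(1 − |s|/(2λ)). Then for every ε ≥ 0 and every N > 0, ‖(id_V − E^{H̄'}((−N,N)))·E^{H̄}([−ε,ε])‖ ≤ 2√2·exp(−λ(N − 2ε − 10‖B‖)); in particular, taking N = M, ‖(id_V − E^{H'}((−M,M)))·E^{H̄}([−ε,ε])‖ ≤ 2√2·exp(−λ(M − 2ε − 10‖B‖)). -/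

import Mathlib

/-- The spectral projection `E^T(I)` of an endomorphism `T` of a finite-dimensional
complex inner product space: the orthogonal projection onto the span of all
eigenvectors of `T` whose eigenvalue lies in `I ⊆ ℝ`. -/
noncomputable def specProj {V : Type*} [NormedAddCommGroup V] [InnerProductSpace ℂ V]
    [FiniteDimensional ℂ V] (T : V →L[ℂ] V) (I : Set ℝ) : V →L[ℂ] V :=
  (⨆ μ ∈ I, Module.End.eigenspace (↑T : V →ₗ[ℂ] V) (μ : ℂ)).subtypeL.comp
    (Submodule.orthogonalProjectionOnto (⨆ μ ∈ I, Module.End.eigenspace (↑T : V →ₗ[ℂ] V) (μ : ℂ)))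

/-- The energy-truncated operator `T̄ := T·E^T((−M,M)) + M·E^T([M,∞))`. -/
noncomputable def etrunc {V : Type*} [NormedAddCommGroup V] [InnerProductSpace ℂ V]
    [FiniteDimensional ℂ V] (T : V →L[ℂ] V) (M : ℝ) : V →L[ℂ] V :=
  T * specProj T (Set.Ioo (-M) M) + (M : ℂ) • specProj T (Set.Ici M)

noncomputable section DiagSec
open NormedSpace
set_option linter.unusedSectionVars false

variable {V : Type*} [NormedAddCommGroup V] [InnerProductSpace ℂ V]
  [FiniteDimensional ℂ V] {ι : Type*} [Fintype ι] [DecidableEq ι]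

local notation "⟪" x ", " y "⟫" => @inner ℂ _ _ x y

/-- diagonal operator in an orthonormal basis -/
noncomputable def Dop (b : OrthonormalBasis ι ℂ V) (g : ι → ℂ) : V →L[ℂ] V :=
  ∑ i, g i • ((innerSL ℂ (b i)).smulRight (b i))

variable (b : OrthonormalBasis ι ℂ V)

lemma Dop_apply (g : ι → ℂ) (x : V) : Dop b g x = ∑ i, (g i * ⟪b i, x⟫) • b i := by
  simp [Dop, ContinuousLinearMap.sum_apply, mul_comm, smul_smul]

lemma Dop_apply_basis (g : ι → ℂ) (j : ι) : Dop b g (b j) = g j • b j := by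
  rw [Dop_apply]
  rw [Finset.sum_eq_single j]
  · simp [orthonormal_iff_ite.mp b.orthonormal]
  · intro i _ hij; simp [orthonormal_iff_ite.mp b.orthonormal, hij]
  · simp

lemma clm_ext_basis {S T : V →L[ℂ] V} (h : ∀ i, S (b i) = T (b i)) : S = T := by
  apply ContinuousLinearMap.coe_injective
  apply b.toBasis.ext
  simpa using h

lemma Dop_mul (g h : ι → ℂ) : Dop b g * Dop b h = Dop b (fun i => g i * h i) := by
  apply clm_ext_basis b
  intro i
  simp [ContinuousLinearMap.mul_apply, Dop_apply_basis, smul_smul, mul_comm]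

lemma Dop_add (g h : ι → ℂ) : Dop b g + Dop b h = Dop b (fun i => g i + h i) := by
  apply clm_ext_basis b
  intro i
  simp [Dop_apply_basis, add_smul]

lemma Dop_one : Dop b (fun _ => 1) = 1 := by
  apply clm_ext_basis b
  intro i
  simp [Dop_apply_basis]

lemma Dop_smul (c : ℂ) (g : ι → ℂ) : c • Dop b g = Dop b (fun i => c * g i) := by
  apply clm_ext_basis b
  intro i
  simp [Dop_apply_basis, smul_smul]

lemma inner_Dop (g : ι → ℂ) (x : V) (i : ι) : ⟪b i, Dop b g x⟫ = g i * ⟪b i, x⟫ := by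
  rw [Dop_apply, inner_sum]
  rw [Finset.sum_eq_single i]
  · simp [inner_smul_right, orthonormal_iff_ite.mp b.orthonormal]
  · intro j _ hij; simp [inner_smul_right, orthonormal_iff_ite.mp b.orthonormal, Ne.symm hij]
  · simp

lemma Dop_norm_le (g : ι → ℂ) (C : ℝ) (hC : 0 ≤ C) (h : ∀ i, ‖g i‖ ≤ C) :
    ‖Dop b g‖ ≤ C := by
  apply ContinuousLinearMap.opNorm_le_bound _ hC
  intro x
  have hx : ∀ y : V, ‖y‖ = Real.sqrt (∑ i, ‖b.repr y i‖ ^ 2) := by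
    intro y
    rw [← b.repr.norm_map y, EuclideanSpace.norm_eq]
  rw [hx (Dop b g x), hx x, ← Real.sqrt_sq hC, ← Real.sqrt_mul (by positivity)]
  apply Real.sqrt_le_sqrt
  rw [Finset.mul_sum]
  apply Finset.sum_le_sum
  intro i _
  have h1 : b.repr (Dop b g x) i = g i * b.repr x i := by
    rw [b.repr_apply_apply, b.repr_apply_apply]
    exact inner_Dop b g x i
  have h2 : ‖g i‖ ≤ C := by exact h i
  rw [h1, norm_mul, mul_pow]
  exact mul_le_mul_of_nonneg_right (pow_le_pow_left₀ (norm_nonneg _) h2 2) (by positivity)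

lemma exp_add_comm' {x y : V →L[ℂ] V} (h : Commute x y) :
    NormedSpace.exp (x + y) = NormedSpace.exp x * NormedSpace.exp y :=
  NormedSpace.exp_add_of_commute_of_mem_ball (𝕂 := ℂ) h
    ((NormedSpace.expSeries_radius_eq_top ℂ (V →L[ℂ] V)).symm ▸ edist_lt_top _ _)
    ((NormedSpace.expSeries_radius_eq_top ℂ (V →L[ℂ] V)).symm ▸ edist_lt_top _ _)

lemma exp_apply_eigenvector {T : V →L[ℂ] V} {v : V} {z : ℂ} (h : T v = z • v) :
    NormedSpace.exp T v = Complex.exp z • v := by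
  have hpow : ∀ n : ℕ, (T ^ n) v = z ^ n • v := by
    intro n
    induction n with
    | zero => simp
    | succ n ih =>
      rw [pow_succ, pow_succ, ContinuousLinearMap.mul_apply, h, map_smul, ih, smul_smul,
        mul_comm]
  have hsum := NormedSpace.expSeries_summable' (𝕂 := ℂ) T
  have happ : NormedSpace.exp T v
      = ∑' n : ℕ, ((n.factorial : ℂ)⁻¹ • T ^ n) v := by
    rw [NormedSpace.exp_eq_tsum ℂ]
    exact (ContinuousLinearMap.apply ℂ V v).map_tsum hsum
  rw [happ]
  have : ∀ n : ℕ, ((n.factorial : ℂ)⁻¹ • T ^ n) v = ((n.factorial : ℂ)⁻¹ * z ^ n) • v := by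
    intro n
    rw [ContinuousLinearMap.smul_apply, hpow, smul_smul]
  rw [tsum_congr this]
  rw [Summable.tsum_smul_const]
  · congr 1
    rw [Complex.exp_eq_exp_ℂ, NormedSpace.exp_eq_tsum ℂ]
    simp [smul_eq_mul]
  · have := NormedSpace.expSeries_summable' (𝕂 := ℂ) z
    simpa [smul_eq_mul] using this

lemma exp_Dop (g : ι → ℂ) :
    NormedSpace.exp (Dop b g) = Dop b (fun i => Complex.exp (g i)) := by
  apply clm_ext_basis b
  intro i
  rw [exp_apply_eigenvector (Dop_apply_basis b g i), Dop_apply_basis]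

open Classical in
lemma specProj_eq_Dop (T : V →L[ℂ] V) (c : ι → ℝ)
    (hT : ∀ i, T (b i) = (c i : ℂ) • b i) (I : Set ℝ) :
    specProj T I = Dop b (fun i => if c i ∈ I then 1 else 0) := by
  have hTD : T = Dop b (fun i => (c i : ℂ)) := by
    apply clm_ext_basis b
    intro i
    rw [hT i, Dop_apply_basis]
  set K := ⨆ μ ∈ I, Module.End.eigenspace (↑T : V →ₗ[ℂ] V) (μ : ℂ) with hK
  set χ : ι → ℂ := fun i => if c i ∈ I then 1 else 0 with hχ
  ext x
  set y := Dop b χ x with hy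
  have hym : y ∈ K := by
    rw [hy, Dop_apply]
    apply Submodule.sum_mem
    intro i _
    by_cases hi : c i ∈ I
    · apply Submodule.smul_mem
      have hb : b i ∈ Module.End.eigenspace (↑T : V →ₗ[ℂ] V) ((c i : ℝ) : ℂ) := by
        rw [Module.End.mem_eigenspace_iff]
        simpa using hT i
      exact Submodule.mem_iSup_of_mem (c i) (Submodule.mem_iSup_of_mem hi hb)
    · simp only [hχ, if_neg hi, zero_mul, zero_smul]
      exact K.zero_mem
  have hcoeff : ∀ (μ : ℝ) (w : V), w ∈ Module.End.eigenspace (↑T : V →ₗ[ℂ] V) (μ : ℂ) →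
      ∀ i, c i ≠ μ → ⟪b i, w⟫ = 0 := by
    intro μ w hw i hne
    have hTw : T w = (μ : ℂ) • w := by
      rw [Module.End.mem_eigenspace_iff] at hw
      simpa using hw
    have h1 : ⟪b i, T w⟫ = (μ : ℂ) * ⟪b i, w⟫ := by rw [hTw, inner_smul_right]
    have h2 : ⟪b i, T w⟫ = (c i : ℂ) * ⟪b i, w⟫ := by
      rw [hTD]; exact inner_Dop b _ w i
    have h3 : ((c i : ℂ) - (μ : ℂ)) * ⟪b i, w⟫ = 0 := by
      rw [sub_mul, ← h2, h1, sub_self]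
    rcases mul_eq_zero.mp h3 with h4 | h4
    · exfalso
      apply hne
      have : ((c i : ℝ) : ℂ) = ((μ : ℝ) : ℂ) := by linear_combination h4
      exact_mod_cast this
    · exact h4
  have hortho : ∀ w ∈ K, ⟪w, x - y⟫ = 0 := by
    intro w hw
    rw [hK, iSup_subtype'] at hw
    induction hw using Submodule.iSup_induction' with
    | mem μ w hw =>
      have hws : w = ∑ j, ⟪b j, w⟫ • b j := (b.sum_repr' w).symm
      rw [hws, sum_inner]
      apply Finset.sum_eq_zero
      intro j _
      rw [inner_smul_left]
      by_cases hj : c j = (μ : ℝ)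
      · have hjI : c j ∈ I := by rw [hj]; exact μ.2
        have hzero : ⟪b j, x - y⟫ = 0 := by
          rw [inner_sub_right, hy, inner_Dop, hχ]
          simp [if_pos hjI]
        rw [hzero, mul_zero]
      · rw [hcoeff (μ : ℝ) w hw j hj]
        simp
    | zero => exact inner_zero_left _
    | add w₁ w₂ _ _ h1 h2 => rw [inner_add_left, h1, h2, add_zero]
  have hproj : ((Submodule.orthogonalProjectionOnto K x : V)) = y := by
    apply Submodule.eq_starProjection_of_mem_of_inner_eq_zero hym
    intro w hw
    rw [inner_eq_zero_symm]
    exact hortho w hw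
  show (K.subtypeL.comp (Submodule.orthogonalProjectionOnto K)) x = _
  simpa using hproj


open NormedSpace in
lemma gron_bound (A' Bop : V →L[ℂ] V) (K lam : ℝ) (hlam : 0 ≤ lam)
    (hK : ∀ t : ℝ, t ∈ Set.Icc 0 lam →
      ‖exp ((t : ℂ) • A') * Bop * exp (-((t : ℂ) • A'))‖ ≤ K) :
    ‖exp ((lam : ℂ) • A') * exp ((lam : ℂ) • (-(A' + Bop)))‖ ≤ Real.exp (K * lam) := by
  set A : V →L[ℂ] V := A' + Bop with hA
  set f : ℝ → (V →L[ℂ] V) := fun t => exp ((t : ℂ) • A') * exp ((t : ℂ) • (-A)) with hf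
  set X : ℝ → (V →L[ℂ] V) := fun t => exp ((t : ℂ) • A') * Bop * exp (-((t : ℂ) • A'))
    with hX
  have hderiv : ∀ t : ℝ, HasDerivAt f (-(X t * f t)) t := by
    intro t
    have h1 : HasDerivAt (fun u : ℝ => exp ((u : ℂ) • A'))
        (exp ((t : ℂ) • A') * A') t :=
      by simpa [Function.comp_def] using
        (hasDerivAt_exp_smul_const (𝕂 := ℂ) A' ((t : ℝ) : ℂ)).scomp t
          Complex.ofRealCLM.hasDerivAt
    have h2 : HasDerivAt (fun u : ℝ => exp ((u : ℂ) • (-A)))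
        (exp ((t : ℂ) • (-A)) * (-A)) t :=
      by simpa [Function.comp_def] using
        (hasDerivAt_exp_smul_const (𝕂 := ℂ) (-A) ((t : ℝ) : ℂ)).scomp t
          Complex.ofRealCLM.hasDerivAt
    have hm := h1.mul h2
    refine hm.congr_deriv ?_
    set E1 := exp ((t : ℂ) • A')
    set E2 := exp ((t : ℂ) • (-A))
    set E1' := exp (-((t : ℂ) • A'))
    have comm2 : E2 * A = A * E2 := by
      have : Commute ((t : ℂ) • (-A)) A := ((Commute.refl A).neg_left).smul_left _
      exact (this.exp_left)
    have hinv : E1' * E1 = 1 := by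
      have hc : Commute (-((t : ℂ) • A')) ((t : ℂ) • A') := (Commute.refl _).neg_left
      rw [← exp_add_comm' hc]
      simp
    have h4 : E1 * Bop * E1' * (E1 * E2) = E1 * Bop * E2 := by
      rw [mul_assoc (E1 * Bop) E1' (E1 * E2), ← mul_assoc E1' E1 E2, hinv, one_mul]
    have h3 : E2 * -A = -A * E2 := by rw [mul_neg, neg_mul, comm2]
    rw [show -(X t * f t) = -(E1 * Bop * E1' * (E1 * E2)) from rfl, h4, h3, hA]
    noncomm_ring
  have cont : ContinuousOn f (Set.Icc 0 lam) := fun t _ =>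
    (hderiv t).continuousAt.continuousWithinAt
  have bound : ∀ t ∈ Set.Ico 0 lam, ‖-(X t * f t)‖ ≤ K * ‖f t‖ + 0 := by
    intro t ht
    rw [norm_neg, add_zero]
    calc ‖X t * f t‖ ≤ ‖X t‖ * ‖f t‖ := norm_mul_le _ _
    _ ≤ K * ‖f t‖ :=
      mul_le_mul_of_nonneg_right (hK t ⟨ht.1, le_of_lt ht.2⟩) (norm_nonneg _)
  have hf0 : ‖f 0‖ ≤ 1 := by
    simp only [hf, Complex.ofReal_zero, zero_smul, exp_zero, one_mul]
    exact ContinuousLinearMap.norm_id_le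
  have := norm_le_gronwallBound_of_norm_deriv_right_le cont
    (fun t _ => (hderiv t).hasDerivWithinAt) hf0 bound lam ⟨hlam, le_refl _⟩
  rw [sub_zero, gronwallBound_ε0, one_mul] at this
  exact this

lemma Dop_mul_mul_norm_le (g h : ι → ℂ) (X : V →L[ℂ] V) (C c1 c2 : ℝ)
    (hX : ‖X‖ ≤ C) (h1 : ∀ i, ‖g i‖ ≤ c1) (h2 : ∀ i, ‖h i‖ ≤ c2)
    (hc1 : 0 ≤ c1) (hc2 : 0 ≤ c2) :
    ‖Dop b g * X * Dop b h‖ ≤ c1 * C * c2 := by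
  calc ‖Dop b g * X * Dop b h‖ ≤ ‖Dop b g * X‖ * ‖Dop b h‖ := norm_mul_le _ _
  _ ≤ (‖Dop b g‖ * ‖X‖) * ‖Dop b h‖ :=
    mul_le_mul_of_nonneg_right (norm_mul_le _ _) (norm_nonneg _)
  _ ≤ (c1 * C) * c2 := by
    have hgn := Dop_norm_le b g c1 hc1 h1
    have hhn := Dop_norm_le b h c2 hc2 h2
    have hC : (0:ℝ) ≤ C := le_trans (norm_nonneg _) hX
    apply mul_le_mul _ hhn (norm_nonneg _) (by positivity)
    exact mul_le_mul hgn hX (norm_nonneg _) hc1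

lemma Dop_sandwich (Bop : V →L[ℂ] V) (g1 g2 h1 h2 : ι → ℂ) :
    Dop b g1 * (Dop b h1 * Bop * Dop b h2) * Dop b g2
      = Dop b (fun i => g1 i * h1 i) * Bop * Dop b (fun i => h2 i * g2 i) := by
  rw [show Dop b g1 * (Dop b h1 * Bop * Dop b h2) * Dop b g2
      = (Dop b g1 * Dop b h1) * Bop * (Dop b h2 * Dop b g2) by noncomm_ring,
    Dop_mul, Dop_mul]

open Complex in
lemma Dop_exp_block (a : ι → ℝ) (Bop : V →L[ℂ] V) (M lam : ℝ)
    (hW : ∀ t : ℝ, |t| ≤ lam →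
      ‖Dop b (fun i => Complex.exp ((t * a i : ℝ) : ℂ)) * Bop *
        Dop b (fun i => Complex.exp ((-(t * a i) : ℝ) : ℂ))‖ ≤ 2 * ‖Bop‖)
    (t : ℝ) (ht : |t| ≤ lam) :
    ‖Dop b (fun i => Complex.exp ((t * (if a i < M then a i else M) : ℝ) : ℂ)) * Bop *
      Dop b (fun i => Complex.exp ((-(t * (if a i < M then a i else M)) : ℝ) : ℂ))‖
      ≤ 7 * ‖Bop‖ := by
  have hBnn : (0:ℝ) ≤ ‖Bop‖ := norm_nonneg _
  have habs : ∀ r : ℝ, ‖Complex.exp ((r : ℝ) : ℂ)‖ = Real.exp r := fun r =>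
    Complex.norm_exp_ofReal r
  have hexp : ∀ x y : ℝ, Complex.exp ((x : ℝ) : ℂ) * Complex.exp ((y : ℝ) : ℂ)
      = Complex.exp ((x + y : ℝ) : ℂ) := by
    intro x y; rw [← Complex.exp_add, Complex.ofReal_add]
  have hWn : ‖Dop b (fun i => Complex.exp ((t * a i : ℝ) : ℂ)) * Bop *
      Dop b (fun i => Complex.exp ((-(t * a i) : ℝ) : ℂ))‖ ≤ 2 * ‖Bop‖ := hW t ht
  -- indicator functions
  set χlt : ι → ℂ := fun i => if a i < M then 1 else 0 with hχlt
  set χge : ι → ℂ := fun i => if a i < M then 0 else 1 with hχge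
  have hχlt1 : ∀ i, ‖χlt i‖ ≤ 1 := by
    intro i; by_cases h : a i < M <;> simp [hχlt, h]
  have hχge1 : ∀ i, ‖χge i‖ ≤ 1 := by
    intro i; by_cases h : a i < M <;> simp [hχge, h]
  have hsplit1 : Dop b (fun i => Complex.exp ((t * (if a i < M then a i else M) : ℝ) : ℂ))
      = Dop b (fun i => Complex.exp ((t * a i : ℝ) : ℂ) * χlt i)
        + Dop b (fun i => Complex.exp ((t * M : ℝ) : ℂ) * χge i) := by
    rw [Dop_add]
    congr 1
    funext i
    by_cases h : a i < M <;> simp [hχlt, hχge, h]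
  have hsplit2 : Dop b (fun i => Complex.exp ((-(t * (if a i < M then a i else M)) : ℝ) : ℂ))
      = Dop b (fun i => Complex.exp ((-(t * a i) : ℝ) : ℂ) * χlt i)
        + Dop b (fun i => Complex.exp ((-(t * M) : ℝ) : ℂ) * χge i) := by
    rw [Dop_add]
    congr 1
    funext i
    by_cases h : a i < M <;> simp [hχlt, hχge, h]
  -- Term bounds
  have hT1 : ‖Dop b (fun i => Complex.exp ((t * a i : ℝ) : ℂ) * χlt i) * Bop *
      Dop b (fun i => Complex.exp ((-(t * a i) : ℝ) : ℂ) * χlt i)‖ ≤ 2 * ‖Bop‖ := by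
    have he : Dop b (fun i => Complex.exp ((t * a i : ℝ) : ℂ) * χlt i) * Bop *
        Dop b (fun i => Complex.exp ((-(t * a i) : ℝ) : ℂ) * χlt i)
        = Dop b χlt * (Dop b (fun i => Complex.exp ((t * a i : ℝ) : ℂ)) * Bop *
            Dop b (fun i => Complex.exp ((-(t * a i) : ℝ) : ℂ))) * Dop b χlt := by
      have hfun1 : (fun i : ι => χlt i * Complex.exp ((t * a i : ℝ) : ℂ))
          = fun i => Complex.exp ((t * a i : ℝ) : ℂ) * χlt i := by
        funext i; exact mul_comm _ _
      rw [Dop_sandwich, hfun1]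
    rw [he]
    have h6 := Dop_mul_mul_norm_le b χlt χlt _ (2 * ‖Bop‖) 1 1 hWn hχlt1 hχlt1
      zero_le_one zero_le_one
    calc _ ≤ 1 * (2 * ‖Bop‖) * 1 := h6
      _ = 2 * ‖Bop‖ := by ring
  have hT4 : ‖Dop b (fun i => Complex.exp ((t * M : ℝ) : ℂ) * χge i) * Bop *
      Dop b (fun i => Complex.exp ((-(t * M) : ℝ) : ℂ) * χge i)‖ ≤ ‖Bop‖ := by
    have hg1 : ∀ i, ‖Complex.exp ((t * M : ℝ) : ℂ) * χge i‖ ≤ Real.exp (t * M) := by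
      intro i
      rw [norm_mul, habs]
      calc Real.exp (t * M) * ‖χge i‖ ≤ Real.exp (t * M) * 1 :=
        mul_le_mul_of_nonneg_left (hχge1 i) (Real.exp_nonneg _)
      _ = Real.exp (t * M) := mul_one _
    have hg2 : ∀ i, ‖Complex.exp ((-(t * M) : ℝ) : ℂ) * χge i‖
        ≤ Real.exp (-(t * M)) := by
      intro i
      rw [norm_mul, habs]
      calc Real.exp (-(t * M)) * ‖χge i‖ ≤ Real.exp (-(t * M)) * 1 :=
        mul_le_mul_of_nonneg_left (hχge1 i) (Real.exp_nonneg _)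
      _ = Real.exp (-(t * M)) := mul_one _
    have h6 := Dop_mul_mul_norm_le b _ _ Bop ‖Bop‖ (Real.exp (t * M)) (Real.exp (-(t * M)))
      (le_refl _) hg1 hg2 (Real.exp_nonneg _) (Real.exp_nonneg _)
    calc _ ≤ Real.exp (t * M) * ‖Bop‖ * Real.exp (-(t * M)) := h6
      _ = ‖Bop‖ := by
        rw [mul_comm (Real.exp (t * M)) ‖Bop‖, mul_assoc, ← Real.exp_add, add_neg_cancel,
          Real.exp_zero, mul_one]
  have hT2 : ‖Dop b (fun i => Complex.exp ((t * a i : ℝ) : ℂ) * χlt i) * Bop *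
      Dop b (fun i => Complex.exp ((-(t * M) : ℝ) : ℂ) * χge i)‖ ≤ 2 * ‖Bop‖ := by
    rcases le_or_gt 0 t with hts | hts
    · -- t ≥ 0 : direct
      have hg1 : ∀ i, ‖Complex.exp ((t * a i : ℝ) : ℂ) * χlt i‖
          ≤ Real.exp (t * M) := by
        intro i
        rw [norm_mul, habs]
        by_cases h : a i < M
        · simp only [hχlt, if_pos h, norm_one, mul_one]
          exact Real.exp_le_exp.mpr (mul_le_mul_of_nonneg_left (le_of_lt h) hts)
        · simp [hχlt, if_neg h, Real.exp_nonneg]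
      have hg2 : ∀ i, ‖Complex.exp ((-(t * M) : ℝ) : ℂ) * χge i‖
          ≤ Real.exp (-(t * M)) := by
        intro i
        rw [norm_mul, habs]
        calc Real.exp (-(t * M)) * ‖χge i‖ ≤ Real.exp (-(t * M)) * 1 :=
          mul_le_mul_of_nonneg_left (hχge1 i) (Real.exp_nonneg _)
        _ = Real.exp (-(t * M)) := mul_one _
      have h6 := Dop_mul_mul_norm_le b _ _ Bop ‖Bop‖ (Real.exp (t * M)) (Real.exp (-(t * M)))
        (le_refl _) hg1 hg2 (Real.exp_nonneg _) (Real.exp_nonneg _)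
      calc _ ≤ Real.exp (t * M) * ‖Bop‖ * Real.exp (-(t * M)) := h6
        _ = ‖Bop‖ := by
          rw [mul_comm (Real.exp (t * M)) ‖Bop‖, mul_assoc, ← Real.exp_add, add_neg_cancel,
            Real.exp_zero, mul_one]
        _ ≤ 2 * ‖Bop‖ := by linarith
    · -- t < 0 : trick
      have he : Dop b (fun i => Complex.exp ((t * a i : ℝ) : ℂ) * χlt i) * Bop *
          Dop b (fun i => Complex.exp ((-(t * M) : ℝ) : ℂ) * χge i)
          = Dop b χlt * (Dop b (fun i => Complex.exp ((t * a i : ℝ) : ℂ)) * Bop *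
              Dop b (fun i => Complex.exp ((-(t * a i) : ℝ) : ℂ))) *
            Dop b (fun i => Complex.exp ((t * a i - t * M : ℝ) : ℂ) * χge i) := by
        have hfun1 : (fun i : ι => χlt i * Complex.exp ((t * a i : ℝ) : ℂ))
            = fun i => Complex.exp ((t * a i : ℝ) : ℂ) * χlt i := by
          funext i; exact mul_comm _ _
        have hfun2 : (fun i : ι => Complex.exp ((-(t * a i) : ℝ) : ℂ) *
              (Complex.exp ((t * a i - t * M : ℝ) : ℂ) * χge i))
            = fun i => Complex.exp ((-(t * M) : ℝ) : ℂ) * χge i := by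
          funext i
          rw [← mul_assoc, hexp, show -(t * a i) + (t * a i - t * M) = -(t * M) by ring]
        rw [Dop_sandwich, hfun1, hfun2]
      rw [he]
      have hg2 : ∀ i, ‖Complex.exp ((t * a i - t * M : ℝ) : ℂ) * χge i‖ ≤ 1 := by
        intro i
        rw [norm_mul, habs]
        by_cases h : a i < M
        · simp [hχge, if_pos h]
        · push_neg at h
          have h1 : t * a i - t * M ≤ 0 := by nlinarith
          calc Real.exp (t * a i - t * M) * ‖χge i‖
              ≤ Real.exp (t * a i - t * M) * 1 :=
            mul_le_mul_of_nonneg_left (hχge1 i) (Real.exp_nonneg _)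
          _ = Real.exp (t * a i - t * M) := mul_one _
          _ ≤ 1 := Real.exp_le_one_iff.mpr h1
      have h6 := Dop_mul_mul_norm_le b χlt _ _ (2 * ‖Bop‖) 1 1 hWn hχlt1 hg2
        zero_le_one zero_le_one
      calc _ ≤ 1 * (2 * ‖Bop‖) * 1 := h6
        _ = 2 * ‖Bop‖ := by ring
  have hT3 : ‖Dop b (fun i => Complex.exp ((t * M : ℝ) : ℂ) * χge i) * Bop *
      Dop b (fun i => Complex.exp ((-(t * a i) : ℝ) : ℂ) * χlt i)‖ ≤ 2 * ‖Bop‖ := by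
    rcases le_or_gt 0 t with hts | hts
    · -- t ≥ 0 : trick
      have he : Dop b (fun i => Complex.exp ((t * M : ℝ) : ℂ) * χge i) * Bop *
          Dop b (fun i => Complex.exp ((-(t * a i) : ℝ) : ℂ) * χlt i)
          = Dop b (fun i => Complex.exp ((t * M - t * a i : ℝ) : ℂ) * χge i) *
            (Dop b (fun i => Complex.exp ((t * a i : ℝ) : ℂ)) * Bop *
              Dop b (fun i => Complex.exp ((-(t * a i) : ℝ) : ℂ))) * Dop b χlt := by
        have hfun3 : (fun i : ι => Complex.exp ((t * M - t * a i : ℝ) : ℂ) * χge i *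
              Complex.exp ((t * a i : ℝ) : ℂ))
            = fun i => Complex.exp ((t * M : ℝ) : ℂ) * χge i := by
          funext i
          rw [mul_assoc, mul_comm (χge i), ← mul_assoc, hexp,
            show t * M - t * a i + t * a i = t * M by ring]
        rw [Dop_sandwich, hfun3]
      rw [he]
      have hg1 : ∀ i, ‖Complex.exp ((t * M - t * a i : ℝ) : ℂ) * χge i‖ ≤ 1 := by
        intro i
        rw [norm_mul, habs]
        by_cases h : a i < M
        · simp [hχge, if_pos h]
        · push_neg at h
          have h1 : t * M - t * a i ≤ 0 := by nlinarith
          calc Real.exp (t * M - t * a i) * ‖χge i‖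
              ≤ Real.exp (t * M - t * a i) * 1 :=
            mul_le_mul_of_nonneg_left (hχge1 i) (Real.exp_nonneg _)
          _ = Real.exp (t * M - t * a i) := mul_one _
          _ ≤ 1 := Real.exp_le_one_iff.mpr h1
      have h6 := Dop_mul_mul_norm_le b _ χlt _ (2 * ‖Bop‖) 1 1 hWn hg1 hχlt1
        zero_le_one zero_le_one
      calc _ ≤ 1 * (2 * ‖Bop‖) * 1 := h6
        _ = 2 * ‖Bop‖ := by ring
    · -- t < 0 : direct
      have hg1 : ∀ i, ‖Complex.exp ((t * M : ℝ) : ℂ) * χge i‖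
          ≤ Real.exp (t * M) := by
        intro i
        rw [norm_mul, habs]
        calc Real.exp (t * M) * ‖χge i‖ ≤ Real.exp (t * M) * 1 :=
          mul_le_mul_of_nonneg_left (hχge1 i) (Real.exp_nonneg _)
        _ = Real.exp (t * M) := mul_one _
      have hg2 : ∀ i, ‖Complex.exp ((-(t * a i) : ℝ) : ℂ) * χlt i‖
          ≤ Real.exp (-(t * M)) := by
        intro i
        rw [norm_mul, habs]
        by_cases h : a i < M
        · simp only [hχlt, if_pos h, norm_one, mul_one]
          apply Real.exp_le_exp.mpr
          nlinarith
        · simp [hχlt, if_neg h, Real.exp_nonneg]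
      have h6 := Dop_mul_mul_norm_le b _ _ Bop ‖Bop‖ (Real.exp (t * M)) (Real.exp (-(t * M)))
        (le_refl _) hg1 hg2 (Real.exp_nonneg _) (Real.exp_nonneg _)
      calc _ ≤ Real.exp (t * M) * ‖Bop‖ * Real.exp (-(t * M)) := h6
        _ = ‖Bop‖ := by
          rw [mul_comm (Real.exp (t * M)) ‖Bop‖, mul_assoc, ← Real.exp_add, add_neg_cancel,
            Real.exp_zero, mul_one]
        _ ≤ 2 * ‖Bop‖ := by linarith
  -- combine
  rw [hsplit1, hsplit2]
  have hfull : (Dop b (fun i => Complex.exp ((t * a i : ℝ) : ℂ) * χlt i)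
        + Dop b (fun i => Complex.exp ((t * M : ℝ) : ℂ) * χge i)) * Bop *
      (Dop b (fun i => Complex.exp ((-(t * a i) : ℝ) : ℂ) * χlt i)
        + Dop b (fun i => Complex.exp ((-(t * M) : ℝ) : ℂ) * χge i))
      = (Dop b (fun i => Complex.exp ((t * a i : ℝ) : ℂ) * χlt i) * Bop *
          Dop b (fun i => Complex.exp ((-(t * a i) : ℝ) : ℂ) * χlt i)
        + Dop b (fun i => Complex.exp ((t * a i : ℝ) : ℂ) * χlt i) * Bop *
          Dop b (fun i => Complex.exp ((-(t * M) : ℝ) : ℂ) * χge i))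
        + (Dop b (fun i => Complex.exp ((t * M : ℝ) : ℂ) * χge i) * Bop *
          Dop b (fun i => Complex.exp ((-(t * a i) : ℝ) : ℂ) * χlt i)
        + Dop b (fun i => Complex.exp ((t * M : ℝ) : ℂ) * χge i) * Bop *
          Dop b (fun i => Complex.exp ((-(t * M) : ℝ) : ℂ) * χge i)) := by
    noncomm_ring
  rw [hfull]
  calc _ ≤ (2 * ‖Bop‖ + 2 * ‖Bop‖) + (2 * ‖Bop‖ + ‖Bop‖) := by
        apply le_trans (norm_add_le _ _)
        apply add_le_add
        · exact le_trans (norm_add_le _ _) (add_le_add hT1 hT2)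
        · exact le_trans (norm_add_le _ _) (add_le_add hT3 hT4)
    _ ≤ 7 * ‖Bop‖ := by linarith

lemma Dop_neg (g : ι → ℂ) : -Dop b g = Dop b (fun i => -g i) := by
  rw [← neg_one_smul ℂ (Dop b g), Dop_smul]
  apply congrArg
  funext i
  ring

lemma Dop_isSelfAdjoint (c : ι → ℝ) : IsSelfAdjoint (Dop b fun i => ((c i : ℝ) : ℂ)) := by
  rw [ContinuousLinearMap.isSelfAdjoint_iff_isSymmetric]
  intro x y
  simp only [ContinuousLinearMap.coe_coe]
  rw [Dop_apply, Dop_apply, sum_inner, inner_sum]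
  apply Finset.sum_congr rfl
  intro i _
  rw [inner_smul_left, inner_smul_right, map_mul, Complex.conj_ofReal,
    ← inner_conj_symm x (b i)]
  ring

end DiagSec

set_option maxHeartbeats 1000000 in
open Classical in
/-- Overlap estimate for the truncated Hamiltonians `H̄' := etrunc H' M`,
`H̄ := H̄' + B`: for `ε ≥ 0` and `N > 0`,
`‖(I − E^{H̄'}((−N,N)))·E^{H̄}([−ε,ε])‖ ≤ 2√2 e^{−λ(N−2ε−10‖B‖)}`; in particular,
taking `N = M`, `‖(I − E^{H'}((−M,M)))·E^{H̄}([−ε,ε])‖ ≤ 2√2 e^{−λ(M−2ε−10‖B‖)}`. -/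
theorem stmt_10 {V : Type*} [NormedAddCommGroup V] [InnerProductSpace ℂ V]
    [FiniteDimensional ℂ V]
    (H' B : V →L[ℂ] V) (hH' : IsSelfAdjoint H') (hB : IsSelfAdjoint B)
    (M : ℝ) (hM : ∀ μ : ℝ, Module.End.HasEigenvalue (↑H' : V →ₗ[ℂ] V) (μ : ℂ) → -M < μ)
    (lam : ℝ) (hlam : 0 < lam)
    (hHad : ∀ s : ℂ, ‖s‖ < 2 * lam →
      ‖NormedSpace.exp (s • H') * B * NormedSpace.exp (-(s • H'))‖ ≤
        ‖B‖ / (1 - ‖s‖ / (2 * lam))) :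
    (∀ (ε N : ℝ), 0 ≤ ε → 0 < N →
      ‖((1 : V →L[ℂ] V) - specProj (etrunc H' M) (Set.Ioo (-N) N)) *
          specProj (etrunc H' M + B) (Set.Icc (-ε) ε)‖ ≤
        2 * Real.sqrt 2 * Real.exp (-lam * (N - 2 * ε - 10 * ‖B‖))) ∧
    (∀ ε : ℝ, 0 ≤ ε →
      ‖((1 : V →L[ℂ] V) - specProj H' (Set.Ioo (-M) M)) *
          specProj (etrunc H' M + B) (Set.Icc (-ε) ε)‖ ≤
        2 * Real.sqrt 2 * Real.exp (-lam * (M - 2 * ε - 10 * ‖B‖))) := by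
  have hBnn : (0:ℝ) ≤ ‖B‖ := norm_nonneg _
  have hlam0 : (0:ℝ) ≤ lam := le_of_lt hlam
  have hs2 : (1:ℝ) ≤ Real.sqrt 2 := by
    rw [show (1:ℝ) = Real.sqrt 1 by simp]
    exact Real.sqrt_le_sqrt (by norm_num)
  have hsym : (↑H' : V →ₗ[ℂ] V).IsSymmetric :=
    ContinuousLinearMap.isSelfAdjoint_iff_isSymmetric.mp hH'
  set b : OrthonormalBasis (Fin (Module.finrank ℂ V)) ℂ V := hsym.eigenvectorBasis rfl with hb
  set a : Fin (Module.finrank ℂ V) → ℝ := hsym.eigenvalues rfl with haa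
  have ha : ∀ i, H' (b i) = ((a i : ℝ) : ℂ) • b i := fun i =>
    hsym.apply_eigenvectorBasis rfl i
  have haM : ∀ i, -M < a i := fun i => hM (a i) (hsym.hasEigenvalue_eigenvalues rfl i)
  set abar : Fin (Module.finrank ℂ V) → ℝ := fun i => if a i < M then a i else M with habar
  set A' : V →L[ℂ] V := Dop b (fun i => ((abar i : ℝ) : ℂ)) with hA'
  have hA'b : ∀ i, A' (b i) = ((abar i : ℝ) : ℂ) • b i := fun i => by
    rw [hA', Dop_apply_basis]
  have hH'D : H' = Dop b (fun i => ((a i : ℝ) : ℂ)) :=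
    clm_ext_basis b (fun i => by rw [ha i, Dop_apply_basis])
  have htrunc : etrunc H' M = A' := by
    rw [etrunc, specProj_eq_Dop b H' a ha (Set.Ioo (-M) M),
      specProj_eq_Dop b H' a ha (Set.Ici M), hH'D, Dop_mul, Dop_smul, Dop_add, hA']
    apply congrArg
    funext i
    by_cases h : a i < M
    · have h1 : a i ∈ Set.Ioo (-M) M := ⟨haM i, h⟩
      have h2 : a i ∉ Set.Ici M := by
        simp only [Set.mem_Ici, not_le]
        exact h
      simp [habar, h, h1, h2]
    · have h1 : a i ∉ Set.Ioo (-M) M := by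
        simp only [Set.mem_Ioo, not_and, not_lt]
        intro _
        exact le_of_not_gt h
      have h2 : a i ∈ Set.Ici M := le_of_not_gt h
      simp [habar, h, h1, h2]
  have hA'sa : IsSelfAdjoint A' := Dop_isSelfAdjoint b abar
  have hAsa : IsSelfAdjoint (A' + B) := hA'sa.add hB
  have hsymA : (↑(A' + B) : V →ₗ[ℂ] V).IsSymmetric :=
    ContinuousLinearMap.isSelfAdjoint_iff_isSymmetric.mp hAsa
  set d : OrthonormalBasis (Fin (Module.finrank ℂ V)) ℂ V := hsymA.eigenvectorBasis rfl with hd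
  set e : Fin (Module.finrank ℂ V) → ℝ := hsymA.eigenvalues rfl with he
  have hde : ∀ j, (A' + B) (d j) = ((e j : ℝ) : ℂ) • d j := fun j =>
    hsymA.apply_eigenvectorBasis rfl j
  -- Hadamard bound in diagonal form
  have hW : ∀ t : ℝ, |t| ≤ lam →
      ‖Dop b (fun i => Complex.exp ((t * a i : ℝ) : ℂ)) * B *
        Dop b (fun i => Complex.exp ((-(t * a i) : ℝ) : ℂ))‖ ≤ 2 * ‖B‖ := by
    intro t ht
    have habsr : ‖((t : ℝ) : ℂ)‖ = |t| := by simp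
    have h1 := hHad ((t : ℝ) : ℂ) (by rw [habsr]; linarith [ht])
    have e1 : NormedSpace.exp (((t : ℝ) : ℂ) • H')
        = Dop b (fun i => Complex.exp ((t * a i : ℝ) : ℂ)) := by
      rw [hH'D, Dop_smul, exp_Dop]
      apply congrArg
      funext i
      rw [Complex.ofReal_mul]
    have e2 : NormedSpace.exp (-(((t : ℝ) : ℂ) • H'))
        = Dop b (fun i => Complex.exp ((-(t * a i) : ℝ) : ℂ)) := by
      rw [hH'D, Dop_smul, Dop_neg, exp_Dop]
      apply congrArg
      funext i
      rw [Complex.ofReal_neg, Complex.ofReal_mul]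
    rw [e1, e2] at h1
    refine le_trans h1 ?_
    rw [habsr]
    have hpos : (0:ℝ) < 2 * lam := by linarith
    have h2 : |t| / (2 * lam) ≤ 1 / 2 := by
      rw [div_le_iff₀ hpos]
      linarith [ht]
    have h3 : (0:ℝ) < 1 - |t| / (2 * lam) := by linarith
    rw [div_le_iff₀ h3]
    nlinarith [hBnn, h2]
  have hblock := Dop_exp_block b a B M lam hW
  -- exp identities
  have eA' : ∀ s : ℝ, NormedSpace.exp (((s : ℝ) : ℂ) • A')
      = Dop b (fun i => Complex.exp ((s * abar i : ℝ) : ℂ)) := by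
    intro s
    rw [hA', Dop_smul, exp_Dop]
    apply congrArg
    funext i
    rw [Complex.ofReal_mul]
  have eA'neg : ∀ s : ℝ, NormedSpace.exp (-(((s : ℝ) : ℂ) • A'))
      = Dop b (fun i => Complex.exp ((-(s * abar i) : ℝ) : ℂ)) := by
    intro s
    rw [hA', Dop_smul, Dop_neg, exp_Dop]
    apply congrArg
    funext i
    rw [Complex.ofReal_neg, Complex.ofReal_mul]
  have eA : ∀ s : ℝ, NormedSpace.exp (((s : ℝ) : ℂ) • (A' + B))
      = Dop d (fun j => Complex.exp ((s * e j : ℝ) : ℂ)) := by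
    intro s
    have hADd : A' + B = Dop d (fun j => ((e j : ℝ) : ℂ)) :=
      clm_ext_basis d (fun j => by rw [hde j, Dop_apply_basis])
    rw [hADd, Dop_smul, exp_Dop]
    apply congrArg
    funext j
    rw [Complex.ofReal_mul]
  -- Gronwall bounds
  have hK1 : ∀ t : ℝ, t ∈ Set.Icc 0 lam →
      ‖NormedSpace.exp ((t : ℂ) • A') * B * NormedSpace.exp (-((t : ℂ) • A'))‖
        ≤ 7 * ‖B‖ := by
    intro t ht
    rw [eA' t, eA'neg t]
    exact hblock t (by rw [abs_of_nonneg ht.1]; exact ht.2)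
  have gr1 := gron_bound A' B (7 * ‖B‖) lam hlam0 hK1
  have hK2 : ∀ t : ℝ, t ∈ Set.Icc 0 lam →
      ‖NormedSpace.exp ((t : ℂ) • (-A')) * (-B) * NormedSpace.exp (-((t : ℂ) • (-A')))‖
        ≤ 7 * ‖B‖ := by
    intro t ht
    have h1 : ((t : ℝ) : ℂ) • (-A') = ((-t : ℝ) : ℂ) • A' := by
      rw [Complex.ofReal_neg, neg_smul, smul_neg]
    rw [h1, eA' (-t), eA'neg (-t)]
    rw [show Dop b (fun i => Complex.exp ((-t * abar i : ℝ) : ℂ)) * (-B) *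
        Dop b (fun i => Complex.exp ((-(-t * abar i) : ℝ) : ℂ))
        = -(Dop b (fun i => Complex.exp ((-t * abar i : ℝ) : ℂ)) * B *
          Dop b (fun i => Complex.exp ((-(-t * abar i) : ℝ) : ℂ))) by rw [mul_neg, neg_mul]]
    rw [norm_neg]
    exact hblock (-t) (by rw [abs_neg, abs_of_nonneg ht.1]; exact ht.2)
  have gr2 := gron_bound (-A') (-B) (7 * ‖B‖) lam hlam0 hK2
  rw [show -(-A' + -B) = A' + B by rw [neg_add, neg_neg, neg_neg]] at gr2
  -- exp cancellation facts
  have hcomm : ∀ (X : V →L[ℂ] V) (s : ℝ),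
      NormedSpace.exp (((s : ℝ) : ℂ) • (-X)) * NormedSpace.exp (((s : ℝ) : ℂ) • X)
        = 1 := by
    intro X s
    rw [← exp_add_comm' ((((Commute.refl X).neg_left).smul_left _).smul_right _)]
    rw [show ((s : ℝ) : ℂ) • (-X) + ((s : ℝ) : ℂ) • X = 0 by
      rw [smul_neg, neg_add_cancel]]
    exact NormedSpace.exp_zero
  -- part 1 (with A' in place of etrunc)
  have main : ∀ (ε N : ℝ), 0 ≤ ε → 0 < N →
      ‖((1 : V →L[ℂ] V) - specProj A' (Set.Ioo (-N) N)) *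
          specProj (A' + B) (Set.Icc (-ε) ε)‖ ≤
        2 * Real.sqrt 2 * Real.exp (-lam * (N - 2 * ε - 10 * ‖B‖)) := by
    intro ε N hε hN
    have hQD := specProj_eq_Dop d (A' + B) e hde (Set.Icc (-ε) ε)
    set Q : V →L[ℂ] V := specProj (A' + B) (Set.Icc (-ε) ε) with hQ
    have hexpQ : ∀ s : ℝ, |s| ≤ lam →
        ‖NormedSpace.exp (((s : ℝ) : ℂ) • (A' + B)) * Q‖ ≤ Real.exp (lam * ε) := by
      intro s hs
      rw [eA s, hQD, Dop_mul]
      apply Dop_norm_le _ _ _ (Real.exp_nonneg _)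
      intro j
      by_cases hj : e j ∈ Set.Icc (-ε) ε
      · rw [if_pos hj, mul_one, Complex.norm_exp_ofReal]
        apply Real.exp_le_exp.mpr
        have h1 : |e j| ≤ ε := abs_le.mpr ⟨hj.1, hj.2⟩
        calc s * e j ≤ |s * e j| := le_abs_self _
          _ = |s| * |e j| := abs_mul _ _
          _ ≤ lam * ε := mul_le_mul hs h1 (abs_nonneg _) hlam0
      · rw [if_neg hj, mul_zero]
        simp [Real.exp_nonneg]
    set χhi : Fin (Module.finrank ℂ V) → ℂ := fun i => if N ≤ abar i then 1 else 0 with hχhi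
    set χlo : Fin (Module.finrank ℂ V) → ℂ := fun i => if abar i ≤ -N then 1 else 0 with hχlo
    have hPD := specProj_eq_Dop b A' abar hA'b (Set.Ioo (-N) N)
    have hsplit : (1 : V →L[ℂ] V) - specProj A' (Set.Ioo (-N) N) = Dop b χhi + Dop b χlo := by
      rw [hPD, sub_eq_iff_eq_add, Dop_add, Dop_add, ← Dop_one b]
      apply congrArg
      funext i
      by_cases h1 : N ≤ abar i
      · have h2 : ¬(abar i ≤ -N) := by linarith
        have h3 : abar i ∉ Set.Ioo (-N) N := by
          simp only [Set.mem_Ioo, not_and, not_lt]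
          intro _
          exact h1
        simp [hχhi, hχlo, h1, h2, h3]
      · by_cases h2 : abar i ≤ -N
        · have h3 : abar i ∉ Set.Ioo (-N) N := by
            simp only [Set.mem_Ioo, not_and, not_lt]
            intro h4
            linarith
          simp [hχhi, hχlo, h1, h2, h3]
        · push_neg at h1 h2
          have h3 : abar i ∈ Set.Ioo (-N) N := ⟨h2, h1⟩
          simp [hχhi, hχlo, not_le.mpr h1, not_le.mpr h2, h3]
    have hexpcancel : ∀ i, Complex.exp ((-(lam * abar i) : ℝ) : ℂ) *
        Complex.exp ((lam * abar i : ℝ) : ℂ) = 1 := by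
      intro i
      rw [← Complex.exp_add, ← Complex.ofReal_add, neg_add_cancel, Complex.ofReal_zero,
        Complex.exp_zero]
    have hexpcancel' : ∀ i, Complex.exp ((lam * abar i : ℝ) : ℂ) *
        Complex.exp ((-(lam * abar i) : ℝ) : ℂ) = 1 := by
      intro i
      rw [← Complex.exp_add, ← Complex.ofReal_add, add_neg_cancel, Complex.ofReal_zero,
        Complex.exp_zero]
    -- plus telescope
    have hplus : ‖Dop b χhi * Q‖ ≤
        Real.exp (-(lam * N)) * Real.exp (7 * ‖B‖ * lam) * Real.exp (lam * ε) := by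
      set X : V →L[ℂ] V :=
        Dop b (fun i => χhi i * Complex.exp ((-(lam * abar i) : ℝ) : ℂ)) with hX
      have h1 : X * NormedSpace.exp ((lam : ℂ) • A') = Dop b χhi := by
        rw [hX, eA' lam, Dop_mul]
        apply congrArg
        funext i
        rw [mul_assoc, hexpcancel i, mul_one]
      have h2 : NormedSpace.exp ((lam : ℂ) • (-(A' + B))) *
          NormedSpace.exp ((lam : ℂ) • (A' + B)) = 1 := hcomm (A' + B) lam
      have htel : Dop b χhi * Q =
          X * (NormedSpace.exp ((lam : ℂ) • A') *
            NormedSpace.exp ((lam : ℂ) • (-(A' + B)))) *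
          (NormedSpace.exp ((lam : ℂ) • (A' + B)) * Q) := by
        calc Dop b χhi * Q
            = (X * NormedSpace.exp ((lam : ℂ) • A')) *
              ((NormedSpace.exp ((lam : ℂ) • (-(A' + B))) *
                NormedSpace.exp ((lam : ℂ) • (A' + B))) * Q) := by
              rw [h1, h2, one_mul]
          _ = X * (NormedSpace.exp ((lam : ℂ) • A') *
              NormedSpace.exp ((lam : ℂ) • (-(A' + B)))) *
              (NormedSpace.exp ((lam : ℂ) • (A' + B)) * Q) := by noncomm_ring
      rw [htel]
      have hXn : ‖X‖ ≤ Real.exp (-(lam * N)) := by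
        apply Dop_norm_le _ _ _ (Real.exp_nonneg _)
        intro i
        by_cases hi : N ≤ abar i
        · rw [hχhi]
          simp only [if_pos hi, one_mul]
          rw [Complex.norm_exp_ofReal]
          apply Real.exp_le_exp.mpr
          have := mul_le_mul_of_nonneg_left hi hlam0
          linarith
        · rw [hχhi]
          simp only [if_neg hi, zero_mul, norm_zero]
          exact Real.exp_nonneg _
      calc ‖X * (NormedSpace.exp ((lam : ℂ) • A') *
            NormedSpace.exp ((lam : ℂ) • (-(A' + B)))) *
            (NormedSpace.exp ((lam : ℂ) • (A' + B)) * Q)‖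
          ≤ ‖X * (NormedSpace.exp ((lam : ℂ) • A') *
              NormedSpace.exp ((lam : ℂ) • (-(A' + B))))‖ *
            ‖NormedSpace.exp ((lam : ℂ) • (A' + B)) * Q‖ := norm_mul_le _ _
        _ ≤ (‖X‖ * ‖NormedSpace.exp ((lam : ℂ) • A') *
              NormedSpace.exp ((lam : ℂ) • (-(A' + B)))‖) *
            ‖NormedSpace.exp ((lam : ℂ) • (A' + B)) * Q‖ :=
          mul_le_mul_of_nonneg_right (norm_mul_le _ _) (norm_nonneg _)
        _ ≤ Real.exp (-(lam * N)) * Real.exp (7 * ‖B‖ * lam) * Real.exp (lam * ε) := by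
          have hq := hexpQ lam (by rw [abs_of_nonneg hlam0])
          apply mul_le_mul _ hq (norm_nonneg _) (by positivity)
          exact mul_le_mul hXn gr1 (norm_nonneg _) (Real.exp_nonneg _)
    -- minus telescope
    have hminus : ‖Dop b χlo * Q‖ ≤
        Real.exp (-(lam * N)) * Real.exp (7 * ‖B‖ * lam) * Real.exp (lam * ε) := by
      set X : V →L[ℂ] V :=
        Dop b (fun i => χlo i * Complex.exp ((lam * abar i : ℝ) : ℂ)) with hX
      have hnegsmul : ((lam : ℝ) : ℂ) • (-A') = ((-lam : ℝ) : ℂ) • A' := by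
        rw [Complex.ofReal_neg, neg_smul, smul_neg]
      have h1 : X * NormedSpace.exp ((lam : ℂ) • (-A')) = Dop b χlo := by
        rw [hX, hnegsmul, eA' (-lam), Dop_mul]
        apply congrArg
        funext i
        rw [show (-lam * abar i : ℝ) = -(lam * abar i) by ring, mul_assoc, hexpcancel' i,
          mul_one]
      have h2 : NormedSpace.exp ((lam : ℂ) • (A' + B)) *
          NormedSpace.exp (((-lam : ℝ) : ℂ) • (A' + B)) = 1 := by
        rw [show ((-lam : ℝ) : ℂ) • (A' + B) = (lam : ℂ) • (-(A' + B)) by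
          rw [Complex.ofReal_neg, neg_smul, smul_neg]]
        rw [← exp_add_comm'
          ((((Commute.refl (A' + B)).neg_right).smul_left _).smul_right _)]
        rw [show (lam : ℂ) • (A' + B) + (lam : ℂ) • (-(A' + B)) = 0 by
          rw [smul_neg, add_neg_cancel]]
        exact NormedSpace.exp_zero
      have htel : Dop b χlo * Q =
          X * (NormedSpace.exp ((lam : ℂ) • (-A')) *
            NormedSpace.exp ((lam : ℂ) • (A' + B))) *
          (NormedSpace.exp (((-lam : ℝ) : ℂ) • (A' + B)) * Q) := by
        calc Dop b χlo * Q
            = (X * NormedSpace.exp ((lam : ℂ) • (-A'))) *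
              ((NormedSpace.exp ((lam : ℂ) • (A' + B)) *
                NormedSpace.exp (((-lam : ℝ) : ℂ) • (A' + B))) * Q) := by
              rw [h1, h2, one_mul]
          _ = _ := by noncomm_ring
      rw [htel]
      have hXn : ‖X‖ ≤ Real.exp (-(lam * N)) := by
        apply Dop_norm_le _ _ _ (Real.exp_nonneg _)
        intro i
        by_cases hi : abar i ≤ -N
        · rw [hχlo]
          simp only [if_pos hi, one_mul]
          rw [Complex.norm_exp_ofReal]
          apply Real.exp_le_exp.mpr
          have := mul_le_mul_of_nonneg_left hi hlam0
          linarith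
        · rw [hχlo]
          simp only [if_neg hi, zero_mul, norm_zero]
          exact Real.exp_nonneg _
      calc ‖X * (NormedSpace.exp ((lam : ℂ) • (-A')) *
            NormedSpace.exp ((lam : ℂ) • (A' + B))) *
            (NormedSpace.exp (((-lam : ℝ) : ℂ) • (A' + B)) * Q)‖
          ≤ ‖X * (NormedSpace.exp ((lam : ℂ) • (-A')) *
              NormedSpace.exp ((lam : ℂ) • (A' + B)))‖ *
            ‖NormedSpace.exp (((-lam : ℝ) : ℂ) • (A' + B)) * Q‖ := norm_mul_le _ _
        _ ≤ (‖X‖ * ‖NormedSpace.exp ((lam : ℂ) • (-A')) *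
              NormedSpace.exp ((lam : ℂ) • (A' + B))‖) *
            ‖NormedSpace.exp (((-lam : ℝ) : ℂ) • (A' + B)) * Q‖ :=
          mul_le_mul_of_nonneg_right (norm_mul_le _ _) (norm_nonneg _)
        _ ≤ Real.exp (-(lam * N)) * Real.exp (7 * ‖B‖ * lam) * Real.exp (lam * ε) := by
          have hq := hexpQ (-lam) (by rw [abs_neg, abs_of_nonneg hlam0])
          apply mul_le_mul _ hq (norm_nonneg _) (by positivity)
          exact mul_le_mul hXn gr2 (norm_nonneg _) (Real.exp_nonneg _)
    -- combine
    calc ‖((1 : V →L[ℂ] V) - specProj A' (Set.Ioo (-N) N)) * Q‖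
        = ‖Dop b χhi * Q + Dop b χlo * Q‖ := by rw [hsplit, add_mul]
      _ ≤ ‖Dop b χhi * Q‖ + ‖Dop b χlo * Q‖ := norm_add_le _ _
      _ ≤ 2 * (Real.exp (-(lam * N)) * Real.exp (7 * ‖B‖ * lam) * Real.exp (lam * ε)) := by
          linarith [hplus, hminus]
      _ = 2 * Real.exp (-(lam * N) + 7 * ‖B‖ * lam + lam * ε) := by
          rw [← Real.exp_add, ← Real.exp_add]
      _ ≤ 2 * Real.sqrt 2 * Real.exp (-lam * (N - 2 * ε - 10 * ‖B‖)) := by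
          have hee : Real.exp (-(lam * N) + 7 * ‖B‖ * lam + lam * ε)
              ≤ Real.exp (-lam * (N - 2 * ε - 10 * ‖B‖)) := by
            apply Real.exp_le_exp.mpr
            nlinarith [hε, hBnn, hlam0]
          nlinarith [Real.exp_pos (-lam * (N - 2 * ε - 10 * ‖B‖)), hs2, hee,
            Real.exp_pos (-(lam * N) + 7 * ‖B‖ * lam + lam * ε)]
  constructor
  · intro ε N hε hN
    rw [htrunc]
    exact main ε N hε hN
  · intro ε hε
    rcases lt_or_ge 0 M with hM0 | hM0
    · have heq : specProj H' (Set.Ioo (-M) M) = specProj A' (Set.Ioo (-M) M) := by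
        rw [specProj_eq_Dop b H' a ha, specProj_eq_Dop b A' abar hA'b]
        apply congrArg
        funext i
        by_cases h : a i < M
        · have h1 : a i ∈ Set.Ioo (-M) M := ⟨haM i, h⟩
          have h2 : abar i ∈ Set.Ioo (-M) M := by
            rw [habar]
            simp only [if_pos h]
            exact h1
          simp [h1, h2]
        · have h1 : a i ∉ Set.Ioo (-M) M := by
            simp only [Set.mem_Ioo, not_and, not_lt]
            intro _
            exact le_of_not_gt h
          have h2 : abar i ∉ Set.Ioo (-M) M := by
            rw [habar]
            simp only [if_neg h, Set.mem_Ioo, not_and, not_lt]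
            intro _
            exact le_refl M
          simp [h1, h2]
      rw [htrunc, heq]
      exact main ε M hε hM0
    · have hP0 : specProj H' (Set.Ioo (-M) M) = 0 := by
        rw [specProj_eq_Dop b H' a ha]
        apply clm_ext_basis b
        intro i
        rw [Dop_apply_basis]
        have h1 : a i ∉ Set.Ioo (-M) M := by
          simp only [Set.mem_Ioo, not_and, not_lt]
          intro h2
          linarith
        rw [if_neg h1]
        simp
      rw [hP0, sub_zero, one_mul, htrunc]
      have hQ1 : ‖specProj (A' + B) (Set.Icc (-ε) ε)‖ ≤ 1 := by
        rw [specProj_eq_Dop d (A' + B) e hde]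
        apply Dop_norm_le _ _ _ zero_le_one
        intro j
        by_cases hj : e j ∈ Set.Icc (-ε) ε <;> simp [hj]
      refine le_trans hQ1 ?_
      have hexp1 : (1:ℝ) ≤ Real.exp (-lam * (M - 2 * ε - 10 * ‖B‖)) := by
        rw [← Real.exp_zero]
        apply Real.exp_le_exp.mpr
        nlinarith [hε, hBnn, hlam0, hM0]
      nlinarith [hs2, hexp1]
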